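/- arXiv:1505.01317 — 6 statements merged into one kernel-verified Lean document; each statement's English description precedes it below -/
import Mathlib

section
/- Let λ(x,y;a,b,c) = 2x² + ax − 3y³ − 2cy² − by. Then (x,y) satisfies λ = 0, ∂λ/∂x = 0 and ∂λ/∂y = 0 if and only if a = −4x, b = −y(4c + 9y), and x² = y²(c + 3y). Consequently the beaks/lips locus of the unfolding G(x,y) = (x²+y³+ax+by+cy², xy) is parametrized by (a,b,c) = (∓4y√(c+3y), −y(4c+9y), c) for c + 3y ≥ 0. -/
/-- The Jacobian determinant of the unfolding `G`, as a function of `(x,y)`. -/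
noncomputable def lam (a b c : ℝ) (x y : ℝ) : ℝ :=
  2 * x ^ 2 + a * x - 3 * y ^ 3 - 2 * c * y ^ 2 - b * y

lemma lam_deriv_x (a b c x y : ℝ) :
    deriv (fun x' => lam a b c x' y) x = 4 * x + a := by
  have h : HasDerivAt (fun x' : ℝ =>
      2 * x' ^ 2 + a * x' - 3 * y ^ 3 - 2 * c * y ^ 2 - b * y) (4 * x + a) x := by
    have h1 : HasDerivAt (fun x' : ℝ => x' ^ 2) (2 * x) x := by
      simpa using hasDerivAt_pow 2 x
    have h2 : HasDerivAt (fun x' : ℝ => x') 1 x := hasDerivAt_id x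
    have := (((h1.const_mul 2).add (h2.const_mul a)).sub_const
      (3 * y ^ 3)).sub_const (2 * c * y ^ 2)
    have := this.sub_const (b * y)
    exact this.congr_deriv (by ring)
  simpa [lam] using h.deriv

lemma lam_deriv_y (a b c x y : ℝ) :
    deriv (fun y' => lam a b c x y') y = -9 * y ^ 2 - 4 * c * y - b := by
  have h : HasDerivAt (fun y' : ℝ =>
      2 * x ^ 2 + a * x - 3 * y' ^ 3 - 2 * c * y' ^ 2 - b * y')
      (-9 * y ^ 2 - 4 * c * y - b) y := by
    have h3 : HasDerivAt (fun y' : ℝ => y' ^ 3) (3 * y ^ 2) y := by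
      simpa using hasDerivAt_pow 3 y
    have h2 : HasDerivAt (fun y' : ℝ => y' ^ 2) (2 * y) y := by
      simpa using hasDerivAt_pow 2 y
    have h1 : HasDerivAt (fun y' : ℝ => y') 1 y := hasDerivAt_id y
    have := (((hasDerivAt_const y (2 * x ^ 2 + a * x)).sub
      (h3.const_mul 3)).sub (h2.const_mul (2 * c))).sub (h1.const_mul b)
    exact this.congr_deriv (by ring)
  simpa [lam] using h.deriv

/-- The system `λ = λₓ = λ_y = 0` holds iff `a = −4x`, `b = −y(4c+9y)` and
`x² = y²(c+3y)`; consequently the beaks/lips locus is parametrized by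
`(a,b,c) = (∓4y√(c+3y), −y(4c+9y), c)` for `c + 3y ≥ 0`. -/
theorem stmt4 :
    (∀ a b c x y : ℝ,
      (lam a b c x y = 0 ∧
       deriv (fun x' => lam a b c x' y) x = 0 ∧
       deriv (fun y' => lam a b c x y') y = 0) ↔
      (a = -4 * x ∧ b = -y * (4 * c + 9 * y) ∧ x ^ 2 = y ^ 2 * (c + 3 * y))) ∧
    (∀ y c ε : ℝ, c + 3 * y ≥ 0 → (ε = 1 ∨ ε = -1) →
      ∃ x : ℝ,
        lam (ε * 4 * y * Real.sqrt (c + 3 * y)) (-y * (4 * c + 9 * y)) c x y = 0 ∧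
        deriv (fun x' => lam (ε * 4 * y * Real.sqrt (c + 3 * y))
          (-y * (4 * c + 9 * y)) c x' y) x = 0 ∧
        deriv (fun y' => lam (ε * 4 * y * Real.sqrt (c + 3 * y))
          (-y * (4 * c + 9 * y)) c x y') y = 0) := by
  have key : ∀ a b c x y : ℝ,
      (lam a b c x y = 0 ∧
       deriv (fun x' => lam a b c x' y) x = 0 ∧
       deriv (fun y' => lam a b c x y') y = 0) ↔
      (a = -4 * x ∧ b = -y * (4 * c + 9 * y) ∧ x ^ 2 = y ^ 2 * (c + 3 * y)) := by
    intro a b c x y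
    rw [lam_deriv_x, lam_deriv_y, lam]
    constructor
    · rintro ⟨h0, h1, h2⟩
      have ha : a = -4 * x := by linarith
      have hb : b = -y * (4 * c + 9 * y) := by nlinarith
      subst ha; subst hb
      refine ⟨rfl, rfl, by nlinarith⟩
    · rintro ⟨ha, hb, hx⟩
      subst ha; subst hb
      refine ⟨by nlinarith, by ring, by ring⟩
  refine ⟨key, ?_⟩
  intro y c ε hc hε
  refine ⟨-ε * y * Real.sqrt (c + 3 * y), ?_⟩
  rw [key]
  have hε2 : ε ^ 2 = 1 := by rcases hε with h | h <;> simp [h]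
  have hs : Real.sqrt (c + 3 * y) ^ 2 = c + 3 * y := Real.sq_sqrt hc
  refine ⟨by ring, rfl, ?_⟩
  calc (-ε * y * Real.sqrt (c + 3 * y)) ^ 2
      = ε ^ 2 * y ^ 2 * Real.sqrt (c + 3 * y) ^ 2 := by ring
    _ = y ^ 2 * (c + 3 * y) := by rw [hε2, hs]; ring
end

section
/- For all real y, c with c + 3y ≥ 0, the point (a, b) = (±4y√(c+3y), −y(4c+9y)) satisfies the polynomial equation 243a⁴ + (256c³ − 864bc)a² + 768b³ − 256b²c² = 0 (with either choice of sign). -/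
/-- The beaks/lips parametrization satisfies the defining equation
`243a⁴ + (256c³ − 864bc)a² + 768b³ − 256b²c² = 0`. -/
theorem stmt5 (y c ε : ℝ) (hc : c + 3 * y ≥ 0) (hε : ε = 1 ∨ ε = -1) :
    let a := ε * 4 * y * Real.sqrt (c + 3 * y)
    let b := -y * (4 * c + 9 * y)
    243 * a ^ 4 + (256 * c ^ 3 - 864 * b * c) * a ^ 2
      + 768 * b ^ 3 - 256 * b ^ 2 * c ^ 2 = 0 := by
  intro a b
  have hε2 : ε ^ 2 = 1 := by rcases hε with h | h <;> simp [h]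
  have hs : Real.sqrt (c + 3 * y) ^ 2 = c + 3 * y := Real.sq_sqrt hc
  have ha2 : a ^ 2 = 16 * y ^ 2 * (c + 3 * y) := by
    have h : a ^ 2 = ε ^ 2 * (16 * y ^ 2 * Real.sqrt (c + 3 * y) ^ 2) := by
      simp only [a]; ring
    rw [h, hε2, hs]; ring
  have ha4 : a ^ 4 = (16 * y ^ 2 * (c + 3 * y)) ^ 2 := by
    rw [show a ^ 4 = (a ^ 2) ^ 2 by ring, ha2]
  rw [ha4, ha2]
  simp only [b]; ring
end

section
/- For all real y, c with c + 4y > 0, the point (a, b, c) = (± y(4c + 15y)(c + 4y)^{−1/2}, −2y(2c + 5y), c) satisfies the polynomial equation 80a⁴(8b − 3c²) − 8a²(285b²c − 192bc³ + 32c⁵) + b²(45b − 16c²)² = 0 (with either choice of sign). -/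
/-- The swallowtail parametrization satisfies the defining equation
`80a⁴(8b − 3c²) − 8a²(285b²c − 192bc³ + 32c⁵) + b²(45b − 16c²)² = 0`. -/
theorem stmt7 (y c ε : ℝ) (hc : c + 4 * y > 0) (hε : ε = 1 ∨ ε = -1) :
    let a := ε * y * (4 * c + 15 * y) / Real.sqrt (c + 4 * y)
    let b := -2 * y * (2 * c + 5 * y)
    80 * a ^ 4 * (8 * b - 3 * c ^ 2)
      - 8 * a ^ 2 * (285 * b ^ 2 * c - 192 * b * c ^ 3 + 32 * c ^ 5)
      + b ^ 2 * (45 * b - 16 * c ^ 2) ^ 2 = 0 := by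
  intro a b
  have hs : Real.sqrt (c + 4 * y) ^ 2 = c + 4 * y := Real.sq_sqrt hc.le
  have hs0 : Real.sqrt (c + 4 * y) ≠ 0 := by positivity
  have hε2 : ε ^ 2 = 1 := by rcases hε with h | h <;> rw [h] <;> ring
  have ha2 : a ^ 2 = y ^ 2 * (4 * c + 15 * y) ^ 2 / (c + 4 * y) := by
    show (ε * y * (4 * c + 15 * y) / Real.sqrt (c + 4 * y)) ^ 2 = _
    rw [div_pow, ← hs]
    field_simp
    simp [Real.sqrt_sq (Real.sqrt_nonneg _), hε2]
  have ha4 : a ^ 4 = (y ^ 2 * (4 * c + 15 * y) ^ 2 / (c + 4 * y)) ^ 2 := by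
    rw [show (4:ℕ) = 2 * 2 by rfl, pow_mul, ha2]
  rw [ha2, ha4]
  have h0 : c + 4 * y ≠ 0 := hc.ne'
  show 80 * (y ^ 2 * (4 * c + 15 * y) ^ 2 / (c + 4 * y)) ^ 2 * (8 * b - 3 * c ^ 2)
      - 8 * (y ^ 2 * (4 * c + 15 * y) ^ 2 / (c + 4 * y)) * (285 * b ^ 2 * c - 192 * b * c ^ 3 + 32 * c ^ 5)
      + b ^ 2 * (45 * b - 16 * c ^ 2) ^ 2 = 0
  simp only [b]
  have hd : c + y * 4 ≠ 0 := by rw [mul_comm]; exact h0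
  rw [div_pow]
  field_simp
  ring
end

section
/- Suppose (x, y, a, b, c) with x ≠ 0, y ≠ 0 satisfies x² = y²(c + 4y), ax = −y²(4c + 15y), and by = −2y²(2c + 5y) (i.e. lies over the swallowtail locus). Then η³λ = −x(16x + a) + y(−81y² − 16cy − b) evaluates to −24y²(c + 5y), and η⁴λ = 32x² + ax − 243y³ − 32cy² − by evaluates to −120y³. In particular η³λ = 0 on this locus if and only if y = −c/5, in which case η⁴λ = 24c³/25 ≠ 0 for c > 0. -/
/-- Over the swallowtail locus, `η³λ = −24y²(c+5y)` and `η⁴λ = −120y³`;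
hence `η³λ = 0` iff `y = −c/5`, in which case `η⁴λ = 24c³/25 ≠ 0` for `c > 0`. -/
theorem stmt8 (x y a b c : ℝ) (hx : x ≠ 0) (hy : y ≠ 0)
    (h1 : x ^ 2 = y ^ 2 * (c + 4 * y))
    (h2 : a * x = -y ^ 2 * (4 * c + 15 * y))
    (h3 : b * y = -2 * y ^ 2 * (2 * c + 5 * y)) :
    (-x * (16 * x + a) + y * (-81 * y ^ 2 - 16 * c * y - b)
        = -24 * y ^ 2 * (c + 5 * y)) ∧
    (32 * x ^ 2 + a * x - 243 * y ^ 3 - 32 * c * y ^ 2 - b * y = -120 * y ^ 3) ∧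
    ((-x * (16 * x + a) + y * (-81 * y ^ 2 - 16 * c * y - b) = 0) ↔ y = -c / 5) ∧
    (y = -c / 5 →
      32 * x ^ 2 + a * x - 243 * y ^ 3 - 32 * c * y ^ 2 - b * y = 24 * c ^ 3 / 25 ∧
      (c > 0 → 32 * x ^ 2 + a * x - 243 * y ^ 3 - 32 * c * y ^ 2 - b * y ≠ 0)) := by
  have e1 : -x * (16 * x + a) + y * (-81 * y ^ 2 - 16 * c * y - b)
      = -24 * y ^ 2 * (c + 5 * y) := by linear_combination (-16) * h1 - h2 - h3
  have e2 : 32 * x ^ 2 + a * x - 243 * y ^ 3 - 32 * c * y ^ 2 - b * y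
      = -120 * y ^ 3 := by linear_combination 32 * h1 + h2 - h3
  refine ⟨e1, e2, ?_, ?_⟩
  · rw [e1]
    constructor
    · intro h
      have hy2 : y ^ 2 ≠ 0 := pow_ne_zero 2 hy
      have : c + 5 * y = 0 := by
        rcases mul_eq_zero.mp h with h' | h'
        · exact absurd h' (mul_ne_zero (by norm_num) hy2)
        · exact h'
      linarith
    · intro h; rw [h]; ring
  · intro h
    rw [e2, h]
    constructor
    · ring
    · intro hc h0
      have hc3 : c ^ 3 > 0 := by positivity
      nlinarith [h0]
end

section
/- For every c > 0, the butterfly locus of the unfolding G(x,y) = (x² + y³ + ax + by + cy², xy) passes through the parameter points (a,b,c) = (± c^{3/2}/√5, 2c²/5, c); concretely, for c > 0, the point (x,y) = (∓ c^{3/2}/(5√5), −c/5) satisfies the four equations λ = 0, ηλ = 0, η²λ = 0, η³λ = 0 at the parameter (a,b,c) = (± c^{3/2}/√5, 2c²/5, c). -/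
/-- For `c > 0` the butterfly locus passes through
`(a,b,c) = (± c^{3/2}/√5, 2c²/5, c)`: the point
`(x,y) = (∓ c^{3/2}/(5√5), −c/5)` solves `λ = ηλ = η²λ = η³λ = 0`. -/
theorem stmt9 (c ε : ℝ) (hc : c > 0) (hε : ε = 1 ∨ ε = -1) :
    let x := -ε * Real.sqrt (c ^ 3) / (5 * Real.sqrt 5)
    let y := -c / 5
    let a := ε * Real.sqrt (c ^ 3) / Real.sqrt 5
    let b := 2 * c ^ 2 / 5
    (2 * x ^ 2 + a * x - 3 * y ^ 3 - 2 * c * y ^ 2 - b * y = 0) ∧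
    (-4 * x ^ 2 - a * x - 9 * y ^ 3 - 4 * c * y ^ 2 - b * y = 0) ∧
    (8 * x ^ 2 + a * x - 27 * y ^ 3 - 8 * c * y ^ 2 - b * y = 0) ∧
    (-16 * x ^ 2 - a * x - 81 * y ^ 3 - 16 * c * y ^ 2 - b * y = 0) := by
  intro x y a b
  have hs : Real.sqrt (c ^ 3) ^ 2 = c ^ 3 := Real.sq_sqrt (by positivity)
  have ht : Real.sqrt 5 ^ 2 = 5 := Real.sq_sqrt (by norm_num)
  have hε2 : ε ^ 2 = 1 := by rcases hε with h | h <;> rw [h] <;> norm_num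
  have hx2 : x ^ 2 = c ^ 3 / 125 := by
    have h : x ^ 2 = ε ^ 2 * Real.sqrt (c ^ 3) ^ 2 / (25 * Real.sqrt 5 ^ 2) := by
      simp only [x]; ring
    rw [h, hs, ht, hε2]; ring
  have hax : a * x = -(c ^ 3) / 25 := by
    have h : a * x = -(ε ^ 2 * Real.sqrt (c ^ 3) ^ 2) / (5 * Real.sqrt 5 ^ 2) := by
      simp only [a, x]; ring
    rw [h, hs, ht, hε2]; ring
  refine ⟨?_, ?_, ?_, ?_⟩ <;> rw [hax] <;> rw [hx2] <;> simp only [y, b] <;> ring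
end

section
/- Let λ(x,y) = 2x² + ax − 3y³ − 2cy² − by. At any point (x,y), the Hessian matrix of λ is diag(4, −18y − 4c), hence det H_λ = −8(2c + 9y). Consequently, on the beaks/lips locus (where a = −4x, b = −y(4c+9y), x² = y²(c+3y)) the Hessian determinant vanishes if and only if y = −2c/9, which for c > 0 yields the goose curve (a,b,c) = (± (8/(9√3)) c^{3/2}, 4c²/9, c). -/
lemma lam_dx (a b c y t : ℝ) : deriv (fun x => lam a b c x y) t = 4 * t + a := by
  have h : HasDerivAt (fun x : ℝ => lam a b c x y) (4 * t + a) t := by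
    have := (((((hasDerivAt_pow 2 t).const_mul 2).add
      ((hasDerivAt_id t).const_mul a)).sub_const (3*y^3)).sub_const (2*c*y^2)).sub_const (b*y)
    convert this using 2 with u
    any_goals rfl
    all_goals (simp [lam]; try ring)
  exact h.deriv

lemma lam_dy (a b c x t : ℝ) :
    deriv (fun y => lam a b c x y) t = -9 * t ^ 2 - 4 * c * t - b := by
  have h : HasDerivAt (fun y : ℝ => lam a b c x y) (-9 * t ^ 2 - 4 * c * t - b) t := by
    have := (((hasDerivAt_const t (2*x^2+a*x)).sub ((hasDerivAt_pow 3 t).const_mul 3)).sub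
      ((hasDerivAt_pow 2 t).const_mul (2*c))).sub ((hasDerivAt_id t).const_mul b)
    convert this using 2 with u
    any_goals rfl
    all_goals (simp [lam]; try ring)
  exact h.deriv

/-- The Hessian of `λ` is `diag(4, −18y − 4c)`, so `det H_λ = −8(2c+9y)`; on the
beaks/lips locus it vanishes iff `y = −2c/9`, which for `c > 0` yields the goose
curve `(a,b,c) = (± (8/(9√3)) c^{3/2}, 4c²/9, c)`. -/
theorem stmt10 :
    (∀ a b c x y : ℝ,
      deriv (fun x' => deriv (fun x'' => lam a b c x'' y) x') x = 4 ∧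
      deriv (fun y' => deriv (fun x' => lam a b c x' y') x) y = 0 ∧
      deriv (fun x' => deriv (fun y' => lam a b c x' y') y) x = 0 ∧
      deriv (fun y' => deriv (fun y'' => lam a b c x y'') y') y = -18 * y - 4 * c ∧
      4 * (-18 * y - 4 * c) - 0 * 0 = -8 * (2 * c + 9 * y)) ∧
    (∀ a b c x y : ℝ,
      a = -4 * x → b = -y * (4 * c + 9 * y) → x ^ 2 = y ^ 2 * (c + 3 * y) →
      (-8 * (2 * c + 9 * y) = 0 ↔ y = -2 * c / 9)) ∧
    (∀ c x : ℝ, c > 0 →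
      x ^ 2 = (-2 * c / 9) ^ 2 * (c + 3 * (-2 * c / 9)) →
      ((-4 * x = 8 / (9 * Real.sqrt 3) * Real.sqrt (c ^ 3) ∨
        -4 * x = -(8 / (9 * Real.sqrt 3)) * Real.sqrt (c ^ 3)) ∧
       -(-2 * c / 9) * (4 * c + 9 * (-2 * c / 9)) = 4 * c ^ 2 / 9)) := by
  refine ⟨?_, ?_, ?_⟩
  · intro a b c x y
    refine ⟨?_, ?_, ?_, ?_, by ring⟩
    · simp only [lam_dx]
      have h : HasDerivAt (fun x' : ℝ => 4 * x' + a) 4 x := by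
        simpa using ((hasDerivAt_id x).const_mul (4:ℝ)).add_const a
      exact h.deriv
    · simp only [lam_dx]
      exact deriv_const _ _
    · simp only [lam_dy]
      exact deriv_const _ _
    · simp only [lam_dy]
      have h : HasDerivAt (fun y' : ℝ => -9 * y' ^ 2 - 4 * c * y' - b)
          (-18 * y - 4 * c) y := by
        have := (((hasDerivAt_pow 2 y).const_mul (-9)).sub
          ((hasDerivAt_id y).const_mul (4*c))).sub_const b
        convert this using 1
        any_goals rfl
        simp; ring
      exact h.deriv
  · intro a b c x y _ _ _
    constructor
    · intro h; linarith
    · intro h; rw [h]; ring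
  · intro c x hc hx
    refine ⟨?_, by ring⟩
    have h3 : Real.sqrt 3 ^ 2 = 3 := Real.sq_sqrt (by norm_num)
    have h3pos : (0:ℝ) < Real.sqrt 3 := Real.sqrt_pos.mpr (by norm_num)
    have hcc : Real.sqrt (c ^ 3) ^ 2 = c ^ 3 := Real.sq_sqrt (pow_nonneg hc.le 3)
    have hsq : (-4 * x) ^ 2 = (8 / (9 * Real.sqrt 3) * Real.sqrt (c ^ 3)) ^ 2 := by
      have : (8 / (9 * Real.sqrt 3) * Real.sqrt (c ^ 3)) ^ 2 = 64 * c ^ 3 / 243 := by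
        field_simp
        nlinarith [h3, hcc]
      rw [this]
      nlinarith [hx]
    rcases sq_eq_sq_iff_eq_or_eq_neg.mp hsq with h | h
    · exact Or.inl h
    · exact Or.inr (by rw [h]; ring)
end
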